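/- In the Capped Round Robin procedure on a single category (uniform matroid per agent with capacity k_i), if agent i precedes agent j in the picking order, then agent i's value for her own bundle is at least her feasible value for agent j's bundle: v_i(X_i) ≥ max over subsets S ⊆ X_j with |S| ≤ k_i of v_i(S). -/

import Mathlib

/-- The best unallocated item for a picker with valuation `w`: an item of `L` of
maximum value (ties broken by the linear order on items). -/
noncomputable def bestItem {α : Type*} [DecidableEq α] [LinearOrder α] [Inhabited α]
    (w : α → ℕ) (L : Finset α) : α :=
  if h : (L.filter (fun g => ∀ g' ∈ L, w g' ≤ w g)).Nonempty
  then (L.filter (fun g => ∀ g' ∈ L, w g' ≤ w g)).min' h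
  else default

/-- Capped Round Robin: in turn `t`, agent `σ t` picks her best remaining item unless
she has reached her capacity, in which case she is skipped; the process runs until the
pool `L` is exhausted (the `fuel` parameter only ensures termination and is taken large
enough that it never runs out). -/
noncomputable def crr {α : Type*} [DecidableEq α] [LinearOrder α] [Inhabited α] {n : ℕ}
    (k : Fin n → ℕ) (v : Fin n → α → ℕ) (σ : ℕ → Fin n) :
    ℕ → ℕ → Finset α → (Fin n → Finset α) → Fin n → Finset α
  | 0, _, _, X => X
  | fuel + 1, t, L, X =>
    if L.Nonempty then
      if (X (σ t)).card < k (σ t) then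
        crr k v σ fuel (t + 1) (L.erase (bestItem (v (σ t)) L))
          (Function.update X (σ t) (insert (bestItem (v (σ t)) L) (X (σ t))))
      else crr k v σ fuel (t + 1) L X
    else X

set_option linter.unusedSectionVars false
set_option maxHeartbeats 1000000

section Helpers
variable {α : Type*} [DecidableEq α] [LinearOrder α] [Inhabited α]

lemma bestItem_spec (w : α → ℕ) {L : Finset α} (hL : L.Nonempty) :
    bestItem w L ∈ L ∧ ∀ a ∈ L, w a ≤ w (bestItem w L) := by
  obtain ⟨b, hb, hmax⟩ := L.exists_max_image w hL
  have hne : (L.filter (fun g => ∀ g' ∈ L, w g' ≤ w g)).Nonempty :=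
    ⟨b, Finset.mem_filter.mpr ⟨hb, hmax⟩⟩
  rw [bestItem, dif_pos hne]
  have := Finset.min'_mem _ hne
  rw [Finset.mem_filter] at this
  exact ⟨this.1, this.2⟩

lemma getD_anti {w : α → ℕ} {h : List α} (hpair : h.Pairwise fun a b => w b ≤ w a)
    {a b : ℕ} (hab : a ≤ b) (hb : b < h.length) :
    w (h.getD b default) ≤ w (h.getD a default) := by
  rcases eq_or_lt_of_le hab with rfl | hlt
  · exact le_refl _
  · rw [List.getD_eq_getElem _ _ hb, List.getD_eq_getElem _ _ (lt_trans hlt hb)]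
    exact List.pairwise_iff_getElem.mp hpair a b (lt_trans hlt hb) hb hlt

lemma sum_map_eq_range (w : α → ℕ) :
    ∀ h : List α, (h.map w).sum = ∑ l ∈ Finset.range h.length, w (h.getD l default)
  | [] => by simp
  | a :: h => by
    rw [List.map_cons, List.sum_cons, sum_map_eq_range w h, List.length_cons,
      Finset.sum_range_succ']
    simp [List.getD_cons_succ, Nat.add_comm]

lemma extract (w : α → ℕ) (k' : ℕ) (hk1 : 1 ≤ k') (h g : List α)
    (hpair : h.Pairwise fun a b => w b ≤ w a)
    (hlen : min k' g.length ≤ h.length)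
    (hval : ∀ r < g.length, w (g.getD r default) ≤ w (h.getD (min r (k' - 1)) default)) :
    ∀ (s : ℕ) (T : Finset ℕ), T.card = s → (∀ r ∈ T, r < g.length) → s ≤ k' →
      ∑ r ∈ T, w (g.getD r default) ≤ ∑ l ∈ Finset.range s, w (h.getD l default) := by
  intro s
  induction s with
  | zero =>
    intro T hcard _ _
    rw [Finset.card_eq_zero] at hcard
    simp [hcard]
  | succ s ih =>
    intro T hcard hT hs
    have hTne : T.Nonempty := Finset.card_pos.mp (by omega)
    set r := T.max' hTne with hr
    have hrT : r ∈ T := T.max'_mem hTne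
    have hrg : r < g.length := hT r hrT
    have hsub : T ⊆ Finset.range (r + 1) := fun x hx =>
      Finset.mem_range.mpr (Nat.lt_succ_of_le (T.le_max' x hx))
    have hsr : s ≤ r := by
      have := Finset.card_le_card hsub
      rw [hcard, Finset.card_range] at this; omega
    have hidx : min r (k' - 1) < h.length := by omega
    have key : w (g.getD r default) ≤ w (h.getD s default) :=
      le_trans (hval r hrg) (getD_anti hpair (by omega) hidx)
    have hih := ih (T.erase r) (by rw [Finset.card_erase_of_mem hrT, hcard]; rfl)
      (fun x hx => hT x (Finset.mem_of_mem_erase hx)) (by omega)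
    calc ∑ x ∈ T, w (g.getD x default)
        = ∑ x ∈ T.erase r, w (g.getD x default) + w (g.getD r default) :=
          (Finset.sum_erase_add T _ hrT).symm
      _ ≤ ∑ l ∈ Finset.range s, w (h.getD l default) + w (h.getD s default) :=
          Nat.add_le_add hih key
      _ = ∑ l ∈ Finset.range (s + 1), w (h.getD l default) :=
          (Finset.sum_range_succ _ s).symm

lemma final_step (w : α → ℕ) (k' : ℕ) (hk1 : 1 ≤ k') (Xi Xj : Finset α) (h g : List α)
    (hXi : Xi = h.toFinset) (hXj : Xj = g.toFinset) (hnd : h.Nodup) (gnd : g.Nodup)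
    (hpair : h.Pairwise fun a b => w b ≤ w a)
    (hval : ∀ r < g.length, w (g.getD r default) ≤ w (h.getD (min r (k' - 1)) default))
    (hlen : min k' g.length ≤ h.length) :
    ∀ S ⊆ Xj, S.card ≤ k' → S.sum w ≤ Xi.sum w := by
  intro S hS hSc
  have hSg : ∀ x ∈ S, x ∈ g := fun x hx => by
    have := hS hx; rw [hXj, List.mem_toFinset] at this; exact this
  have hinj : Set.InjOn (fun x => g.idxOf x) S := by
    intro x hx y hy hxy
    have hx' := List.idxOf_lt_length_iff.mpr (hSg x hx)
    have hy' := List.idxOf_lt_length_iff.mpr (hSg y hy)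
    have d1 : g.getD (g.idxOf x) default = x := by
      rw [List.getD_eq_getElem _ _ hx', List.getElem_idxOf hx']
    have d2 : g.getD (g.idxOf y) default = y := by
      rw [List.getD_eq_getElem _ _ hy', List.getElem_idxOf hy']
    have hxy' : g.idxOf x = g.idxOf y := hxy
    rw [← d1, ← d2, hxy']
  set T := S.image (fun x => g.idxOf x) with hT
  have hTcard : T.card = S.card := Finset.card_image_of_injOn hinj
  have hTlt : ∀ r ∈ T, r < g.length := by
    intro r hr
    obtain ⟨x, hx, rfl⟩ := Finset.mem_image.mp hr
    exact List.idxOf_lt_length_iff.mpr (hSg x hx)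
  have hsum : ∑ r ∈ T, w (g.getD r default) = S.sum w := by
    rw [hT, Finset.sum_image hinj]
    apply Finset.sum_congr rfl
    intro x hx
    have hx' := List.idxOf_lt_length_iff.mpr (hSg x hx)
    rw [List.getD_eq_getElem _ _ hx', List.getElem_idxOf hx']
  have hScg : S.card ≤ g.length := by
    have := Finset.card_le_card hS
    rwa [hXj, List.toFinset_card_of_nodup gnd] at this
  have h1 : S.sum w ≤ ∑ l ∈ Finset.range S.card, w (h.getD l default) := by
    rw [← hsum]
    exact extract w k' hk1 h g hpair hlen hval S.card T hTcard hTlt hSc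
  have hsh : S.card ≤ h.length := by omega
  have h2 : ∑ l ∈ Finset.range S.card, w (h.getD l default) ≤
      ∑ l ∈ Finset.range h.length, w (h.getD l default) :=
    Finset.sum_le_sum_of_subset (Finset.range_subset_range.mpr hsh)
  have h3 : Xi.sum w = ∑ l ∈ Finset.range h.length, w (h.getD l default) := by
    rw [hXi, List.sum_toFinset w hnd, sum_map_eq_range]
  omega

end Helpers

lemma crr_main {α : Type*} [DecidableEq α] [LinearOrder α] [Inhabited α] {n : ℕ}
    (hn : 0 < n) (k : Fin n → ℕ) (v : Fin n → α → ℕ) (ord : Equiv.Perm (Fin n))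
    (i j : Fin n) (hij : ord.symm i < ord.symm j) (hk1 : 1 ≤ k i) :
    ∀ (fuel t : ℕ) (L : Finset α) (X : Fin n → Finset α) (h g : List α),
      X i = h.toFinset → X j = g.toFinset → h.Nodup → g.Nodup →
      Disjoint L (X i) → Disjoint L (X j) →
      (∀ a ∈ L, ∀ b ∈ h, v i a ≤ v i b) →
      h.Pairwise (fun a b => v i b ≤ v i a) →
      h.length ≤ k i →
      (∀ r < g.length, v i (g.getD r default) ≤ v i (h.getD (min r (k i - 1)) default)) →
      min (k i) g.length ≤ h.length →
      ((ord.symm i : ℕ) < t % n → t % n ≤ (ord.symm j : ℕ) →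
        min (k i) (g.length + 1) ≤ h.length) →
      ∀ S ⊆ crr k v (fun t => ord ⟨t % n, Nat.mod_lt t hn⟩) fuel t L X j,
        S.card ≤ k i →
        S.sum (v i) ≤ (crr k v (fun t => ord ⟨t % n, Nat.mod_lt t hn⟩) fuel t L X i).sum (v i) := by
  have hp : ((ord.symm i : Fin n) : ℕ) < ((ord.symm j : Fin n) : ℕ) := hij
  have hq : ((ord.symm j : Fin n) : ℕ) < n := (ord.symm j).isLt
  have h2n : 2 ≤ n := by omega
  have hne : i ≠ j := by
    intro e; rw [e] at hij; exact lt_irrefl _ hij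
  intro fuel
  induction fuel with
  | zero =>
    intro t L X h g hXi hXj hnd gnd _ _ _ hpair _ hval hC1 _
    simp only [crr]
    exact final_step (v i) (k i) hk1 (X i) (X j) h g hXi hXj hnd gnd hpair hval hC1
  | succ fuel ih =>
    intro t L X h g hXi hXj hnd gnd hdLi hdLj hLh hpair hhk hval hC1 hC2
    have hmlt : t % n < n := Nat.mod_lt t hn
    have hmod : (t + 1) % n = if t % n + 1 = n then 0 else t % n + 1 := by
      have e : (t + 1) % n = (t % n + 1) % n := by
        rw [Nat.add_mod, Nat.mod_eq_of_lt (show 1 < n by omega)]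
      rw [e]; split
      · simp [*]
      · exact Nat.mod_eq_of_lt (by omega)
    have hmod' : (t + 1) % n = 0 ∨ (t + 1) % n = t % n + 1 := by
      rw [hmod]; split
      · exact Or.inl rfl
      · exact Or.inr rfl
    by_cases hL : L.Nonempty
    · simp only [crr, if_pos hL]
      have hagi : (ord ⟨t % n, Nat.mod_lt t hn⟩ = i) ↔ t % n = ((ord.symm i : Fin n) : ℕ) := by
        rw [Equiv.apply_eq_iff_eq_symm_apply, Fin.ext_iff]
      have hagj : (ord ⟨t % n, Nat.mod_lt t hn⟩ = j) ↔ t % n = ((ord.symm j : Fin n) : ℕ) := by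
        rw [Equiv.apply_eq_iff_eq_symm_apply, Fin.ext_iff]
      by_cases hiag : t % n = ((ord.symm i : Fin n) : ℕ)
      · -- i's turn
        have hA : ord ⟨t % n, Nat.mod_lt t hn⟩ = i := hagi.mpr hiag
        rw [hA]
        obtain ⟨hbL, hbmax⟩ := bestItem_spec (v i) hL
        set b := bestItem (v i) L with hb
        have hbXi : b ∉ h := by
          have := Finset.disjoint_left.mp hdLi hbL
          rw [hXi, List.mem_toFinset] at this; exact this
        have hXicard : (X i).card = h.length := by
          rw [hXi, List.toFinset_card_of_nodup hnd]
        have hm1 : (t + 1) % n = t % n + 1 := by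
          rw [hmod, if_neg (by omega)]
        by_cases hcap : (X i).card < k i
        · rw [if_pos hcap]
          refine ih (t + 1) (L.erase b) _ (h ++ [b]) g ?_ ?_ ?_ gnd ?_ ?_ ?_ ?_ ?_ ?_ ?_ ?_
          · rw [Function.update_self, hXi, List.toFinset_append]
            ext x; simp [or_comm]
          · rw [Function.update_of_ne hne.symm, hXj]
          · rw [List.nodup_append]
            refine ⟨hnd, List.nodup_singleton b, ?_⟩
            intro a ha c hab
            rw [List.mem_singleton] at hab
            subst hab
            exact fun e => hbXi (e ▸ ha)
          · rw [Function.update_self]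
            rw [Finset.disjoint_insert_right]
            exact ⟨Finset.notMem_erase b L,
              Finset.disjoint_of_subset_left (Finset.erase_subset b L) (hXi ▸ hdLi)⟩
          · rw [Function.update_of_ne hne.symm]
            exact Finset.disjoint_of_subset_left (Finset.erase_subset b L) hdLj
          · intro a ha c hc
            rw [List.mem_append] at hc
            rcases hc with hc | hc
            · exact hLh a (Finset.mem_of_mem_erase ha) c hc
            · rw [List.mem_singleton] at hc
              rw [hc]
              exact hbmax a (Finset.mem_of_mem_erase ha)
          · rw [List.pairwise_append]
            refine ⟨hpair, List.pairwise_singleton _ b, ?_⟩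
            intro x hx y hy
            rw [List.mem_singleton] at hy
            rw [hy]
            exact hLh b hbL x hx
          · rw [List.length_append, List.length_singleton]; omega
          · intro r hr
            have hidx : min r (k i - 1) < h.length := by omega
            rw [List.getD_append _ _ _ _ hidx]
            exact hval r hr
          · rw [List.length_append, List.length_singleton]; omega
          · rw [List.length_append, List.length_singleton, hm1]
            intro _ _
            omega
        · rw [if_neg hcap]
          refine ih (t + 1) L X h g hXi hXj hnd gnd hdLi hdLj hLh hpair hhk hval hC1 ?_
          rw [hm1]
          intro _ _
          omega
      · by_cases hjag : t % n = ((ord.symm j : Fin n) : ℕ)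
        · -- j's turn
          have hA : ord ⟨t % n, Nat.mod_lt t hn⟩ = j := hagj.mpr hjag
          rw [hA]
          obtain ⟨hbL, _⟩ := bestItem_spec (v j) hL
          set b := bestItem (v j) L with hb
          have hbXj : b ∉ g := by
            have := Finset.disjoint_left.mp hdLj hbL
            rw [hXj, List.mem_toFinset] at this; exact this
          have hCkey : min (k i) (g.length + 1) ≤ h.length := hC2 (by omega) (by omega)
          by_cases hcap : (X j).card < k j
          · rw [if_pos hcap]
            refine ih (t + 1) (L.erase b) _ h (g ++ [b]) ?_ ?_ hnd ?_ ?_ ?_ ?_ hpair hhk ?_ ?_ ?_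
            · rw [Function.update_of_ne hne, hXi]
            · rw [Function.update_self, hXj, List.toFinset_append]
              ext x; simp [or_comm]
            · rw [List.nodup_append]
              refine ⟨gnd, List.nodup_singleton b, ?_⟩
              intro a ha c hab
              rw [List.mem_singleton] at hab
              subst hab
              exact fun e => hbXj (e ▸ ha)
            · rw [Function.update_of_ne hne]
              exact Finset.disjoint_of_subset_left (Finset.erase_subset b L) hdLi
            · rw [Function.update_self, Finset.disjoint_insert_right]
              exact ⟨Finset.notMem_erase b L,
                Finset.disjoint_of_subset_left (Finset.erase_subset b L) (hXj ▸ hdLj)⟩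
            · intro a ha c hc
              exact hLh a (Finset.mem_of_mem_erase ha) c hc
            · intro r hr
              rw [List.length_append, List.length_singleton] at hr
              rcases Nat.lt_or_ge r g.length with hrg | hrg
              · rw [List.getD_append _ _ _ _ hrg]
                exact hval r hrg
              · have hreq : r = g.length := by omega
                subst hreq
                have e : (g ++ [b]).getD g.length default = b := by
                  rw [List.getD_eq_getElem _ _ (by simp [List.length_append])]
                  exact List.getElem_concat_length (l := g) (a := b) (i := g.length) rfl _
                rw [e]
                have hidx : min g.length (k i - 1) < h.length := by omega
                have hmem : h.getD (min g.length (k i - 1)) default ∈ h := by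
                  rw [List.getD_eq_getElem _ _ hidx]
                  exact List.getElem_mem hidx
                exact hLh b hbL _ hmem
            · rw [List.length_append, List.length_singleton]
              exact hCkey
            · intro h1 h2
              exfalso
              omega
          · rw [if_neg hcap]
            refine ih (t + 1) L X h g hXi hXj hnd gnd hdLi hdLj hLh hpair hhk hval hC1 ?_
            intro h1 h2
            exfalso
            omega
        · -- someone else's turn
          have hAi : ord ⟨t % n, Nat.mod_lt t hn⟩ ≠ i := fun e => hiag (hagi.mp e)
          have hAj : ord ⟨t % n, Nat.mod_lt t hn⟩ ≠ j := fun e => hjag (hagj.mp e)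
          have hC2' : ((ord.symm i : Fin n) : ℕ) < (t + 1) % n → (t + 1) % n ≤ ((ord.symm j : Fin n) : ℕ) →
              min (k i) (g.length + 1) ≤ h.length := by
            intro h1 h2
            exact hC2 (by omega) (by omega)
          by_cases hcap : (X (ord ⟨t % n, Nat.mod_lt t hn⟩)).card < k (ord ⟨t % n, Nat.mod_lt t hn⟩)
          · rw [if_pos hcap]
            set b := bestItem (v (ord ⟨t % n, Nat.mod_lt t hn⟩)) L with hb
            refine ih (t + 1) (L.erase b) _ h g ?_ ?_ hnd gnd ?_ ?_ ?_ hpair hhk hval hC1 hC2'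
            · rw [Function.update_of_ne (Ne.symm hAi), hXi]
            · rw [Function.update_of_ne (Ne.symm hAj), hXj]
            · rw [Function.update_of_ne (Ne.symm hAi)]
              exact Finset.disjoint_of_subset_left (Finset.erase_subset b L) (hXi ▸ hdLi)
            · rw [Function.update_of_ne (Ne.symm hAj)]
              exact Finset.disjoint_of_subset_left (Finset.erase_subset b L) (hXj ▸ hdLj)
            · intro a ha c hc
              exact hLh a (Finset.mem_of_mem_erase ha) c hc
          · rw [if_neg hcap]
            exact ih (t + 1) L X h g hXi hXj hnd gnd hdLi hdLj hLh hpair hhk hval hC1 hC2'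
    · simp only [crr, if_neg hL]
      exact final_step (v i) (k i) hk1 (X i) (X j) h g hXi hXj hnd gnd hpair hval hC1

/-- In Capped Round Robin on a single category (agent `i` has capacity `k i`, the
picking order is given by the permutation `ord` repeated cyclically), if agent `i`
precedes agent `j` in the order, then `i`'s value for her own bundle is at least her
feasible value (over capacity-respecting subsets) of `j`'s bundle. -/
theorem stmt3 {α : Type*} [DecidableEq α] [LinearOrder α] [Inhabited α] {n : ℕ}
    (hn : 0 < n) (M : Finset α) (k : Fin n → ℕ) (hk : M.card ≤ ∑ i, k i)
    (v : Fin n → α → ℕ) (ord : Equiv.Perm (Fin n))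
    (X : Fin n → Finset α)
    (hX : X = crr k v (fun t => ord ⟨t % n, Nat.mod_lt t hn⟩)
      (n * (M.card + 1)) 0 M (fun _ => ∅))
    (i j : Fin n) (hij : ord.symm i < ord.symm j) :
    ∀ S ⊆ X j, S.card ≤ k i → S.sum (v i) ≤ (X i).sum (v i) := by
  intro S hS hSc
  by_cases hk0 : k i = 0
  · have hSe : S = ∅ := Finset.card_eq_zero.mp (by omega)
    subst hSe
    simp
  · have hk1 : 1 ≤ k i := by omega
    subst hX
    refine crr_main hn k v ord i j hij hk1 (n * (M.card + 1)) 0 M (fun _ => ∅) [] []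
      (by simp) (by simp) List.nodup_nil List.nodup_nil (Finset.disjoint_empty_right M)
      (Finset.disjoint_empty_right M)
      (fun a _ b hb => absurd hb (List.not_mem_nil (a := b))) List.Pairwise.nil (Nat.zero_le _)
      (fun r hr => absurd hr (Nat.not_lt_zero r)) (by simp)
      (fun h1 _ => absurd h1 (by simp)) S hS hSc
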